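/- arXiv:1905.03654 — 2 statements merged into one kernel-verified Lean document; each statement's English description precedes it below -/
import Mathlib

section
/- For a tree with n ≥ 2 vertices and sum of squared degrees K = Σ_i k_i^2, the variance of the sum of edge lengths D in a uniformly random linear arrangement is V[D] = ((n+1)/45)[(n-1)^2 + (n/4 - 1) K]. -/
open Finset

namespace VarAux

lemma hS1 (m : ℕ) : ∑ i ∈ Finset.range m, (i:ℚ) = m*(m-1)/2 := by
  induction m with
  | zero => simp
  | succ k ih => rw [Finset.sum_range_succ, ih]; push_cast; ring

lemma hS2 (m : ℕ) : ∑ i ∈ Finset.range m, (i:ℚ)^2 = m*(m-1)*(2*m-1)/6 := by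
  induction m with
  | zero => simp
  | succ k ih => rw [Finset.sum_range_succ, ih]; push_cast; ring

lemma hS3 (m : ℕ) : ∑ i ∈ Finset.range m, (i:ℚ)^3 = (m:ℚ)^2*((m:ℚ)-1)^2/4 := by
  induction m with
  | zero => simp
  | succ k ih => rw [Finset.sum_range_succ, ih]; push_cast; ring

lemma hS4 (m : ℕ) : ∑ i ∈ Finset.range m, (i:ℚ)^4
    = (m:ℚ)*((m:ℚ)-1)*(2*(m:ℚ)-1)*(3*(m:ℚ)^2-3*(m:ℚ)-1)/30 := by
  induction m with
  | zero => simp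
  | succ k ih => rw [Finset.sum_range_succ, ih]; push_cast; ring

lemma sum_poly4 (m : ℕ) (a b c e f : ℚ) :
    ∑ i ∈ Finset.range m, (a*(i:ℚ)^4 + b*(i:ℚ)^3 + c*(i:ℚ)^2 + e*(i:ℚ) + f)
    = a*((m:ℚ)*((m:ℚ)-1)*(2*(m:ℚ)-1)*(3*(m:ℚ)^2-3*(m:ℚ)-1)/30)
      + b*((m:ℚ)^2*((m:ℚ)-1)^2/4) + c*((m:ℚ)*((m:ℚ)-1)*(2*(m:ℚ)-1)/6)
      + e*((m:ℚ)*((m:ℚ)-1)/2) + f*m := by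
  simp only [Finset.sum_add_distrib, ← Finset.mul_sum, hS1, hS2, hS3, hS4,
    Finset.sum_const, Finset.card_range, nsmul_eq_mul]
  ring

lemma sumAr (m : ℕ) :
    ∑ i ∈ Finset.range m, ∑ j ∈ Finset.range m, |(i:ℚ) - (j:ℚ)| = ((m:ℚ)^3 - m)/3 := by
  induction m with
  | zero => simp
  | succ k ih =>
    have habs : ∀ i ∈ Finset.range k, |(i:ℚ) - (k:ℚ)| = (k:ℚ) - i := by
      intro i hi
      rw [abs_sub_comm]
      refine abs_of_nonneg (by
        have : (i:ℚ) ≤ k := by exact_mod_cast (Finset.mem_range.mp hi).le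
        linarith)
    rw [Finset.sum_range_succ]
    have h1 : ∑ i ∈ Finset.range k, ∑ j ∈ Finset.range (k+1), |(i:ℚ) - (j:ℚ)|
        = (∑ i ∈ Finset.range k, ∑ j ∈ Finset.range k, |(i:ℚ) - (j:ℚ)|)
          + ∑ i ∈ Finset.range k, ((k:ℚ) - i) := by
      rw [← Finset.sum_add_distrib]
      refine Finset.sum_congr rfl fun i hi => ?_
      rw [Finset.sum_range_succ, habs i hi]
    have h2 : ∑ j ∈ Finset.range (k+1), |(k:ℚ) - (j:ℚ)|
        = ∑ j ∈ Finset.range k, ((k:ℚ) - j) := by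
      rw [Finset.sum_range_succ]
      simp only [sub_self, abs_zero, add_zero]
      refine Finset.sum_congr rfl fun j hj => ?_
      refine abs_of_nonneg (by
        have : (j:ℚ) ≤ k := by exact_mod_cast (Finset.mem_range.mp hj).le
        linarith)
    have h3 : ∑ i ∈ Finset.range k, ((k:ℚ) - i) = k*k - k*(k-1)/2 := by
      rw [Finset.sum_sub_distrib, hS1, Finset.sum_const, Finset.card_range, nsmul_eq_mul]
    rw [h1, h2, h3, ih]
    push_cast
    ring

lemma sumBr (m : ℕ) :
    ∑ i ∈ Finset.range m, ∑ j ∈ Finset.range m, ((i:ℚ) - (j:ℚ))^2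
      = ((m:ℚ)^4 - (m:ℚ)^2)/6 := by
  have key : ∀ i ∈ Finset.range m, ∑ j ∈ Finset.range m, ((i:ℚ) - (j:ℚ))^2
      = (m:ℚ)*(i:ℚ)^2 - 2*(i:ℚ)*((m:ℚ)*((m:ℚ)-1)/2) + (m:ℚ)*((m:ℚ)-1)*(2*(m:ℚ)-1)/6 := by
    intro i _
    have : ∀ j ∈ Finset.range m, ((i:ℚ) - (j:ℚ))^2
        = (i:ℚ)^2 - 2*(i:ℚ)*(j:ℚ) + (j:ℚ)^2 := fun j _ => by ring
    rw [Finset.sum_congr rfl this]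
    simp only [Finset.sum_add_distrib, Finset.sum_sub_distrib, ← Finset.mul_sum, hS1, hS2,
      Finset.sum_const, Finset.card_range, nsmul_eq_mul]
  rw [Finset.sum_congr rfl key]
  have : ∀ i ∈ Finset.range m, (m:ℚ)*(i:ℚ)^2 - 2*(i:ℚ)*((m:ℚ)*((m:ℚ)-1)/2)
      + (m:ℚ)*((m:ℚ)-1)*(2*(m:ℚ)-1)/6
      = (0:ℚ)*(i:ℚ)^4 + (0:ℚ)*(i:ℚ)^3 + (m:ℚ)*(i:ℚ)^2 + (-((m:ℚ)*((m:ℚ)-1)))*(i:ℚ)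
        + (m:ℚ)*((m:ℚ)-1)*(2*(m:ℚ)-1)/6 := fun i _ => by ring
  rw [Finset.sum_congr rfl this, sum_poly4]
  ring

lemma sRow (m : ℕ) : ∀ i < m, ∑ j ∈ Finset.range m, |(i:ℚ) - (j:ℚ)|
    = (i:ℚ)^2 - (i:ℚ)*((m:ℚ)-1) + ((m:ℚ)^2-(m:ℚ))/2 := by
  induction m with
  | zero => omega
  | succ k ih =>
    intro i hi
    rw [Finset.sum_range_succ]
    rcases Nat.lt_or_ge i k with h | h
    · rw [ih i h]
      have : |(i:ℚ) - (k:ℚ)| = (k:ℚ) - i := by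
        rw [abs_sub_comm]
        refine abs_of_nonneg (by
          have : (i:ℚ) ≤ k := by exact_mod_cast h.le
          linarith)
      rw [this]; push_cast; ring
    · have hik : i = k := by omega
      subst hik
      simp only [sub_self, abs_zero, add_zero]
      have : ∀ j ∈ Finset.range i, |(i:ℚ) - (j:ℚ)| = (i:ℚ) - j := by
        intro j hj
        refine abs_of_nonneg (by
          have : (j:ℚ) ≤ i := by exact_mod_cast (Finset.mem_range.mp hj).le
          linarith)
      rw [Finset.sum_congr rfl this, Finset.sum_sub_distrib, hS1, Finset.sum_const,
        Finset.card_range, nsmul_eq_mul]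
      push_cast; ring

lemma sumCr (m : ℕ) :
    ∑ i ∈ Finset.range m, (∑ j ∈ Finset.range m, |(i:ℚ) - (j:ℚ)|)^2
      = (7*(m:ℚ)^5 - 15*(m:ℚ)^3 + 8*(m:ℚ))/60 := by
  have key : ∀ i ∈ Finset.range m, (∑ j ∈ Finset.range m, |(i:ℚ) - (j:ℚ)|)^2
      = (1:ℚ)*(i:ℚ)^4 + (-2*((m:ℚ)-1))*(i:ℚ)^3
        + (((m:ℚ)-1)^2 + ((m:ℚ)^2-(m:ℚ)))*(i:ℚ)^2
        + (-(((m:ℚ)^2-(m:ℚ)))*((m:ℚ)-1))*(i:ℚ)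
        + (((m:ℚ)^2-(m:ℚ))/2)^2 := by
    intro i hi
    rw [sRow m i (Finset.mem_range.mp hi)]
    ring
  rw [Finset.sum_congr rfl key, sum_poly4]
  ring


variable {n : ℕ}



variable {n : ℕ}

/-- Any two embeddings of a fintype into `Fin n` differ by a permutation. -/
lemma exists_perm_comp {ι : Type*} [Fintype ι] (f g : ι ↪ Fin n) :
    ∃ σ : Equiv.Perm (Fin n), ∀ x, σ (f x) = g x := by
  classical
  let e : {x // x ∈ Set.range ⇑f} ≃ {x // x ∈ Set.range ⇑g} :=
    (Equiv.ofInjective f f.injective).symm.trans (Equiv.ofInjective g g.injective)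
  refine ⟨e.extendSubtype, fun x => ?_⟩
  have h1 : e.extendSubtype (f x) = e ⟨f x, ⟨x, rfl⟩⟩ :=
    Equiv.extendSubtype_apply_of_mem e (f x) ⟨x, rfl⟩
  rw [h1]
  show ((((Equiv.ofInjective f f.injective).symm.trans
      (Equiv.ofInjective g g.injective)) ⟨f x, ⟨x, rfl⟩⟩ : {x // x ∈ Set.range ⇑g}) : Fin n) = g x
  rw [Equiv.trans_apply]
  have h2 : (Equiv.ofInjective f f.injective).symm ⟨f x, ⟨x, rfl⟩⟩ = x :=
    Equiv.ofInjective_symm_apply f.injective x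
  rw [h2, Equiv.ofInjective_apply]

/-- Invariance: sums over permutations composed with an injective tuple do not
depend on the tuple. -/
lemma perm_sum_invariant {ι : Type*} [Fintype ι] (F : (ι → Fin n) → ℚ)
    (f g : ι → Fin n) (hf : Function.Injective f) (hg : Function.Injective g) :
    ∑ π : Equiv.Perm (Fin n), F (⇑π ∘ f) = ∑ π : Equiv.Perm (Fin n), F (⇑π ∘ g) := by
  obtain ⟨σ, hσ⟩ := exists_perm_comp ⟨f, hf⟩ ⟨g, hg⟩
  have key := Equiv.sum_comp (Equiv.mulRight σ) (fun π : Equiv.Perm (Fin n) => F (⇑π ∘ f))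
  rw [← key]
  refine Finset.sum_congr rfl fun π _ => ?_
  congr 1
  funext x
  simp only [Function.comp_apply, Equiv.coe_mulRight, Equiv.Perm.mul_apply]
  exact congrArg π (hσ x)




variable {n : ℕ}

/-- The (rational) distance between the positions of two vertices. -/
def dd {n : ℕ} (i j : Fin n) : ℚ := |((i : ℕ) : ℚ) - ((j : ℕ) : ℚ)|

lemma dd_self (i : Fin n) : dd i i = 0 := by simp [dd]

lemma dd_comm (i j : Fin n) : dd i j = dd j i := abs_sub_comm _ _

lemma inj2 {u v : Fin n} (huv : u ≠ v) : Function.Injective ![u, v] := by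
  intro a b hab
  fin_cases a <;> fin_cases b <;> simp_all

lemma inj3 {u v w : Fin n} (huv : u ≠ v) (huw : u ≠ w) (hvw : v ≠ w) :
    Function.Injective ![u, v, w] := by
  intro a b hab
  fin_cases a <;> fin_cases b <;> simp_all

lemma inj4 {u v w x : Fin n} (huv : u ≠ v) (huw : u ≠ w) (hux : u ≠ x)
    (hvw : v ≠ w) (hvx : v ≠ x) (hwx : w ≠ x) :
    Function.Injective ![u, v, w, x] := by
  intro a b hab
  fin_cases a <;> fin_cases b <;> simp_all

lemma two_le {u v : Fin n} (huv : u ≠ v) : 2 ≤ n := by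
  have h := Finset.card_le_univ ({u, v} : Finset (Fin n))
  rw [Finset.card_pair huv] at h
  simpa using h

lemma three_le {u v w : Fin n} (huv : u ≠ v) (huw : u ≠ w) (hvw : v ≠ w) : 3 ≤ n := by
  have h := Finset.card_le_univ ({u, v, w} : Finset (Fin n))
  rw [Finset.card_insert_of_notMem (by simp [huv, huw]), Finset.card_pair hvw] at h
  simpa using h

lemma four_le {u v w x : Fin n} (huv : u ≠ v) (huw : u ≠ w) (hux : u ≠ x)
    (hvw : v ≠ w) (hvx : v ≠ x) (hwx : w ≠ x) : 4 ≤ n := by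
  have h := Finset.card_le_univ ({u, v, w, x} : Finset (Fin n))
  rw [Finset.card_insert_of_notMem (by simp [huv, huw, hux]),
    Finset.card_insert_of_notMem (by simp [hvw, hvx]), Finset.card_pair hwx] at h
  simpa using h

lemma sum_split_erase (u : Fin n) (f : Fin n → ℚ) :
    ∑ y : Fin n, f y = f u + ∑ y ∈ Finset.univ.erase u, f y :=
  (Finset.add_sum_erase _ f (Finset.mem_univ u)).symm

lemma sum_split2 {u v : Fin n} (h : u ≠ v) (f : Fin n → ℚ) :
    ∑ y : Fin n, f y = f u + f v + ∑ y ∈ Finset.univ \ {u, v}, f y := by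
  rw [← Finset.sum_sdiff (Finset.subset_univ ({u, v} : Finset (Fin n))),
    Finset.sum_pair h]
  ring

lemma sum_split3 {u v w : Fin n} (huv : u ≠ v) (huw : u ≠ w) (hvw : v ≠ w)
    (f : Fin n → ℚ) :
    ∑ y : Fin n, f y = f u + f v + f w + ∑ y ∈ Finset.univ \ {u, v, w}, f y := by
  rw [← Finset.sum_sdiff (Finset.subset_univ ({u, v, w} : Finset (Fin n))),
    Finset.sum_insert (by simp [huv, huw]), Finset.sum_pair hvw]
  ring

lemma card_erase_q (u : Fin n) (hn : 1 ≤ n) :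
    (((Finset.univ.erase u).card : ℕ) : ℚ) = (n : ℚ) - 1 := by
  rw [Finset.card_erase_of_mem (Finset.mem_univ u), Finset.card_univ, Fintype.card_fin]
  push_cast [Nat.cast_sub hn]
  ring

lemma card_sdiff2_q {u v : Fin n} (h : u ≠ v) :
    (((Finset.univ \ {u, v} : Finset (Fin n)).card : ℕ) : ℚ) = (n : ℚ) - 2 := by
  rw [Finset.card_sdiff_of_subset (Finset.subset_univ _), Finset.card_pair h, Finset.card_univ,
    Fintype.card_fin]
  push_cast [Nat.cast_sub (two_le h)]
  ring

lemma card_sdiff3_q {u v w : Fin n} (huv : u ≠ v) (huw : u ≠ w) (hvw : v ≠ w) :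
    (((Finset.univ \ {u, v, w} : Finset (Fin n)).card : ℕ) : ℚ) = (n : ℚ) - 3 := by
  rw [Finset.card_sdiff_of_subset (Finset.subset_univ _),
    Finset.card_insert_of_notMem (by simp [huv, huw]), Finset.card_pair hvw,
    Finset.card_univ, Fintype.card_fin]
  push_cast [Nat.cast_sub (three_le huv huw hvw)]
  ring


lemma count2 (F : Fin n → Fin n → ℚ) :
    ∑ π : Equiv.Perm (Fin n), ∑ i, ∑ j, F (π i) (π j)
      = (Nat.factorial n : ℚ) * ∑ i, ∑ j, F i j := by
  have h : ∀ π : Equiv.Perm (Fin n), (∑ i, ∑ j, F (π i) (π j)) = ∑ i, ∑ j, F i j := by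
    intro π
    rw [Equiv.sum_comp π (fun i => ∑ j, F i (π j))]
    exact Finset.sum_congr rfl fun i _ => Equiv.sum_comp π (F i)
  rw [Finset.sum_congr rfl fun π _ => h π, Finset.sum_const, Finset.card_univ,
    Fintype.card_perm, Fintype.card_fin, nsmul_eq_mul]

lemma count3 (F : Fin n → Fin n → Fin n → ℚ) :
    ∑ π : Equiv.Perm (Fin n), ∑ i, ∑ j, ∑ k, F (π i) (π j) (π k)
      = (Nat.factorial n : ℚ) * ∑ i, ∑ j, ∑ k, F i j k := by
  have h : ∀ π : Equiv.Perm (Fin n),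
      (∑ i, ∑ j, ∑ k, F (π i) (π j) (π k)) = ∑ i, ∑ j, ∑ k, F i j k := by
    intro π
    rw [Equiv.sum_comp π (fun i => ∑ j, ∑ k, F i (π j) (π k))]
    refine Finset.sum_congr rfl fun i _ => ?_
    rw [Equiv.sum_comp π (fun j => ∑ k, F i j (π k))]
    exact Finset.sum_congr rfl fun j _ => Equiv.sum_comp π (F i j)
  rw [Finset.sum_congr rfl fun π _ => h π, Finset.sum_const, Finset.card_univ,
    Fintype.card_perm, Fintype.card_fin, nsmul_eq_mul]

lemma count4 (F : Fin n → Fin n → Fin n → Fin n → ℚ) :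
    ∑ π : Equiv.Perm (Fin n), ∑ i, ∑ j, ∑ k, ∑ l, F (π i) (π j) (π k) (π l)
      = (Nat.factorial n : ℚ) * ∑ i, ∑ j, ∑ k, ∑ l, F i j k l := by
  have h : ∀ π : Equiv.Perm (Fin n),
      (∑ i, ∑ j, ∑ k, ∑ l, F (π i) (π j) (π k) (π l)) = ∑ i, ∑ j, ∑ k, ∑ l, F i j k l := by
    intro π
    rw [Equiv.sum_comp π (fun i => ∑ j, ∑ k, ∑ l, F i (π j) (π k) (π l))]
    refine Finset.sum_congr rfl fun i _ => ?_
    rw [Equiv.sum_comp π (fun j => ∑ k, ∑ l, F i j (π k) (π l))]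
    refine Finset.sum_congr rfl fun j _ => ?_
    rw [Equiv.sum_comp π (fun k => ∑ l, F i j k (π l))]
    exact Finset.sum_congr rfl fun k _ => Equiv.sum_comp π (F i j k)
  rw [Finset.sum_congr rfl fun π _ => h π, Finset.sum_const, Finset.card_univ,
    Fintype.card_perm, Fintype.card_fin, nsmul_eq_mul]

lemma inv2 (F : Fin n → Fin n → ℚ) {i j u v : Fin n} (hij : i ≠ j) (huv : u ≠ v) :
    ∑ π : Equiv.Perm (Fin n), F (π i) (π j) = ∑ π : Equiv.Perm (Fin n), F (π u) (π v) := by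
  have h := perm_sum_invariant (fun h : Fin 2 → Fin n => F (h 0) (h 1))
    ![i, j] ![u, v] (inj2 hij) (inj2 huv)
  simpa using h

lemma inv3 (F : Fin n → Fin n → Fin n → ℚ) {i j k u v y : Fin n}
    (hij : i ≠ j) (hik : i ≠ k) (hjk : j ≠ k)
    (huv : u ≠ v) (huy : u ≠ y) (hvy : v ≠ y) :
    ∑ π : Equiv.Perm (Fin n), F (π i) (π j) (π k)
      = ∑ π : Equiv.Perm (Fin n), F (π u) (π v) (π y) := by
  have h := perm_sum_invariant (fun h : Fin 3 → Fin n => F (h 0) (h 1) (h 2))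
    ![i, j, k] ![u, v, y] (inj3 hij hik hjk) (inj3 huv huy hvy)
  simpa using h

lemma inv4 (F : Fin n → Fin n → Fin n → Fin n → ℚ) {i j k l u v x y : Fin n}
    (hij : i ≠ j) (hik : i ≠ k) (hil : i ≠ l) (hjk : j ≠ k) (hjl : j ≠ l) (hkl : k ≠ l)
    (huv : u ≠ v) (hux : u ≠ x) (huy : u ≠ y) (hvx : v ≠ x) (hvy : v ≠ y) (hxy : x ≠ y) :
    ∑ π : Equiv.Perm (Fin n), F (π i) (π j) (π k) (π l)
      = ∑ π : Equiv.Perm (Fin n), F (π u) (π v) (π x) (π y) := by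
  have h := perm_sum_invariant (fun h : Fin 4 → Fin n => F (h 0) (h 1) (h 2) (h 3))
    ![i, j, k, l] ![u, v, x, y] (inj4 hij hik hil hjk hjl hkl)
    (inj4 huv hux huy hvx hvy hxy)
  simpa using h

lemma pair_moment (F : Fin n → Fin n → ℚ) (hF : ∀ i, F i i = 0) {u v : Fin n}
    (huv : u ≠ v) :
    (Nat.factorial n : ℚ) * (∑ i, ∑ j, F i j)
      = (n:ℚ) * ((n:ℚ)-1) * ∑ π : Equiv.Perm (Fin n), F (π u) (π v) := by
  have hn : 1 ≤ n := le_trans (by norm_num) (two_le huv)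
  rw [← count2 F]
  have step1 : ∑ π : Equiv.Perm (Fin n), ∑ i, ∑ j, F (π i) (π j)
      = ∑ i, ∑ j, ∑ π : Equiv.Perm (Fin n), F (π i) (π j) := by
    rw [Finset.sum_comm]
    exact Finset.sum_congr rfl fun i _ => Finset.sum_comm
  rw [step1]
  have step2 : ∀ i : Fin n, ∑ j, ∑ π : Equiv.Perm (Fin n), F (π i) (π j)
      = ((n:ℚ) - 1) * ∑ π : Equiv.Perm (Fin n), F (π u) (π v) := by
    intro i
    rw [sum_split_erase i (fun j => ∑ π : Equiv.Perm (Fin n), F (π i) (π j))]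
    have h0 : ∑ π : Equiv.Perm (Fin n), F (π i) (π i) = 0 := by simp [hF]
    have h1 : ∀ j ∈ Finset.univ.erase i, ∑ π : Equiv.Perm (Fin n), F (π i) (π j)
        = ∑ π : Equiv.Perm (Fin n), F (π u) (π v) := by
      intro j hj
      exact inv2 F (Ne.symm (Finset.mem_erase.mp hj).1) huv
    rw [h0, Finset.sum_congr rfl h1, Finset.sum_const, nsmul_eq_mul, card_erase_q i hn]
    ring
  rw [Finset.sum_congr rfl fun i _ => step2 i, Finset.sum_const, Finset.card_univ,
    Fintype.card_fin, nsmul_eq_mul]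
  ring



lemma triple_moment (F : Fin n → Fin n → Fin n → ℚ) (hF1 : ∀ i k, F i i k = 0)
    (hF2 : ∀ i j, F i j i = 0) {u v y : Fin n} (huv : u ≠ v) (huy : u ≠ y)
    (hvy : v ≠ y) :
    (Nat.factorial n : ℚ) * (∑ i, ∑ j, ∑ k, F i j k)
      = (n:ℚ)*((n:ℚ)-1) * (∑ π : Equiv.Perm (Fin n), F (π u) (π v) (π v))
        + (n:ℚ)*((n:ℚ)-1)*((n:ℚ)-2) * ∑ π : Equiv.Perm (Fin n), F (π u) (π v) (π y) := by
  have hn1 : 1 ≤ n := le_trans (by norm_num) (two_le huv)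
  rw [← count3 F]
  have step1 : ∑ π : Equiv.Perm (Fin n), ∑ i, ∑ j, ∑ k, F (π i) (π j) (π k)
      = ∑ i, ∑ j, ∑ k, ∑ π : Equiv.Perm (Fin n), F (π i) (π j) (π k) := by
    rw [Finset.sum_comm]
    refine Finset.sum_congr rfl fun i _ => ?_
    rw [Finset.sum_comm]
    exact Finset.sum_congr rfl fun j _ => Finset.sum_comm
  rw [step1]
  have inner : ∀ i j : Fin n, i ≠ j →
      ∑ k, ∑ π : Equiv.Perm (Fin n), F (π i) (π j) (π k)
        = (∑ π : Equiv.Perm (Fin n), F (π u) (π v) (π v))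
          + ((n:ℚ)-2) * ∑ π : Equiv.Perm (Fin n), F (π u) (π v) (π y) := by
    intro i j hij
    rw [sum_split2 hij (fun k => ∑ π : Equiv.Perm (Fin n), F (π i) (π j) (π k))]
    have t1 : ∑ π : Equiv.Perm (Fin n), F (π i) (π j) (π i) = 0 := by simp [hF2]
    have t2 : ∑ π : Equiv.Perm (Fin n), F (π i) (π j) (π j)
        = ∑ π : Equiv.Perm (Fin n), F (π u) (π v) (π v) :=
      inv2 (fun a b => F a b b) hij huv
    have t3 : ∀ k ∈ Finset.univ \ {i, j},
        ∑ π : Equiv.Perm (Fin n), F (π i) (π j) (π k)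
          = ∑ π : Equiv.Perm (Fin n), F (π u) (π v) (π y) := by
      intro k hk
      simp only [Finset.mem_sdiff, Finset.mem_insert, Finset.mem_singleton] at hk
      push_neg at hk
      exact inv3 F hij (Ne.symm hk.2.1) (Ne.symm hk.2.2) huv huy hvy
    rw [t1, t2, Finset.sum_congr rfl t3, Finset.sum_const, nsmul_eq_mul,
      card_sdiff2_q hij]
    ring
  have step2 : ∀ i : Fin n,
      ∑ j, ∑ k, ∑ π : Equiv.Perm (Fin n), F (π i) (π j) (π k)
        = ((n:ℚ)-1) * ((∑ π : Equiv.Perm (Fin n), F (π u) (π v) (π v))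
            + ((n:ℚ)-2) * ∑ π : Equiv.Perm (Fin n), F (π u) (π v) (π y)) := by
    intro i
    rw [sum_split_erase i
      (fun j => ∑ k, ∑ π : Equiv.Perm (Fin n), F (π i) (π j) (π k))]
    have z : ∑ k, ∑ π : Equiv.Perm (Fin n), F (π i) (π i) (π k) = 0 := by simp [hF1]
    have h1 : ∀ j ∈ Finset.univ.erase i,
        ∑ k, ∑ π : Equiv.Perm (Fin n), F (π i) (π j) (π k)
          = (∑ π : Equiv.Perm (Fin n), F (π u) (π v) (π v))
            + ((n:ℚ)-2) * ∑ π : Equiv.Perm (Fin n), F (π u) (π v) (π y) := by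
      intro j hj
      exact inner i j (Ne.symm (Finset.mem_erase.mp hj).1)
    rw [z, Finset.sum_congr rfl h1, Finset.sum_const, nsmul_eq_mul, card_erase_q i hn1]
    ring
  rw [Finset.sum_congr rfl fun i _ => step2 i, Finset.sum_const, Finset.card_univ,
    Fintype.card_fin, nsmul_eq_mul]
  ring



lemma quad_moment {u v x y : Fin n} (huv : u ≠ v) (hux : u ≠ x) (huy : u ≠ y)
    (hvx : v ≠ x) (hvy : v ≠ y) (hxy : x ≠ y) :
    (Nat.factorial n : ℚ) * ((∑ i : Fin n, ∑ j : Fin n, dd i j)^2)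
      = 2*(n:ℚ)*((n:ℚ)-1) * (∑ π : Equiv.Perm (Fin n), dd (π u) (π v) ^ 2)
        + 4*(n:ℚ)*((n:ℚ)-1)*((n:ℚ)-2)
            * (∑ π : Equiv.Perm (Fin n), dd (π u) (π v) * dd (π u) (π y))
        + (n:ℚ)*((n:ℚ)-1)*((n:ℚ)-2)*((n:ℚ)-3)
            * ∑ π : Equiv.Perm (Fin n), dd (π u) (π v) * dd (π x) (π y) := by
  have hn1 : 1 ≤ n := le_trans (by norm_num) (two_le huv)
  have hsq : (∑ i : Fin n, ∑ j : Fin n, dd i j)^2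
      = ∑ i : Fin n, ∑ j : Fin n, ∑ k : Fin n, ∑ l : Fin n, dd i j * dd k l := by
    rw [sq]
    rw [Finset.sum_mul]
    refine Finset.sum_congr rfl fun i _ => ?_
    rw [Finset.sum_mul]
    refine Finset.sum_congr rfl fun j _ => ?_
    rw [Finset.mul_sum]
    refine Finset.sum_congr rfl fun k _ => ?_
    rw [Finset.mul_sum]
  rw [hsq, ← count4 (fun a b c e => dd a b * dd c e)]
  have step1 : ∑ π : Equiv.Perm (Fin n), ∑ i, ∑ j, ∑ k, ∑ l,
        dd (π i) (π j) * dd (π k) (π l)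
      = ∑ i, ∑ j, ∑ k, ∑ l, ∑ π : Equiv.Perm (Fin n),
        dd (π i) (π j) * dd (π k) (π l) := by
    rw [Finset.sum_comm]
    refine Finset.sum_congr rfl fun i _ => ?_
    rw [Finset.sum_comm]
    refine Finset.sum_congr rfl fun j _ => ?_
    rw [Finset.sum_comm]
    refine Finset.sum_congr rfl fun k _ => ?_
    exact Finset.sum_comm
  rw [step1]
  set β := ∑ π : Equiv.Perm (Fin n), dd (π u) (π v) ^ 2 with hβ
  set γ := ∑ π : Equiv.Perm (Fin n), dd (π u) (π v) * dd (π u) (π y) with hγ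
  set W := ∑ π : Equiv.Perm (Fin n), dd (π u) (π v) * dd (π x) (π y) with hW
  -- evaluation of the sum over (k,l) for a fixed pair i ≠ j
  have Ai : ∀ i j : Fin n, i ≠ j →
      ∑ l, ∑ π : Equiv.Perm (Fin n), dd (π i) (π j) * dd (π i) (π l)
        = β + ((n:ℚ)-2)*γ := by
    intro i j hij
    rw [sum_split2 hij
      (fun l => ∑ π : Equiv.Perm (Fin n), dd (π i) (π j) * dd (π i) (π l))]
    have t1 : ∑ π : Equiv.Perm (Fin n), dd (π i) (π j) * dd (π i) (π i) = 0 := by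
      simp [dd_self]
    have t2 : ∑ π : Equiv.Perm (Fin n), dd (π i) (π j) * dd (π i) (π j) = β := by
      rw [hβ]
      have := inv2 (fun a b => dd a b * dd a b) hij huv
      rw [this]
      exact Finset.sum_congr rfl fun π _ => by ring
    have t3 : ∀ l ∈ Finset.univ \ {i, j},
        ∑ π : Equiv.Perm (Fin n), dd (π i) (π j) * dd (π i) (π l) = γ := by
      intro l hl
      simp only [Finset.mem_sdiff, Finset.mem_insert, Finset.mem_singleton] at hl
      push_neg at hl
      rw [hγ]
      exact inv3 (fun a b c => dd a b * dd a c) hij (Ne.symm hl.2.1) (Ne.symm hl.2.2)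
        huv huy hvy
    rw [t1, t2, Finset.sum_congr rfl t3, Finset.sum_const, nsmul_eq_mul,
      card_sdiff2_q hij]
    ring
  have Aj : ∀ i j : Fin n, i ≠ j →
      ∑ l, ∑ π : Equiv.Perm (Fin n), dd (π i) (π j) * dd (π j) (π l)
        = β + ((n:ℚ)-2)*γ := by
    intro i j hij
    rw [sum_split2 hij
      (fun l => ∑ π : Equiv.Perm (Fin n), dd (π i) (π j) * dd (π j) (π l))]
    have t1 : ∑ π : Equiv.Perm (Fin n), dd (π i) (π j) * dd (π j) (π i) = β := by
      have e1 : ∀ π : Equiv.Perm (Fin n), dd (π i) (π j) * dd (π j) (π i)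
          = dd (π i) (π j) * dd (π i) (π j) := fun π => by rw [dd_comm (π j) (π i)]
      rw [Finset.sum_congr rfl fun π _ => e1 π, hβ]
      have := inv2 (fun a b => dd a b * dd a b) hij huv
      rw [this]
      exact Finset.sum_congr rfl fun π _ => by ring
    have t2 : ∑ π : Equiv.Perm (Fin n), dd (π i) (π j) * dd (π j) (π j) = 0 := by
      simp [dd_self]
    have t3 : ∀ l ∈ Finset.univ \ {i, j},
        ∑ π : Equiv.Perm (Fin n), dd (π i) (π j) * dd (π j) (π l) = γ := by
      intro l hl
      simp only [Finset.mem_sdiff, Finset.mem_insert, Finset.mem_singleton] at hl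
      push_neg at hl
      have e1 : ∀ π : Equiv.Perm (Fin n), dd (π i) (π j) * dd (π j) (π l)
          = dd (π j) (π i) * dd (π j) (π l) := fun π => by rw [dd_comm (π i) (π j)]
      rw [Finset.sum_congr rfl fun π _ => e1 π, hγ]
      exact inv3 (fun a b c => dd a b * dd a c) (Ne.symm hij) (Ne.symm hl.2.2)
        (Ne.symm hl.2.1) huv huy hvy
    rw [t1, t2, Finset.sum_congr rfl t3, Finset.sum_const, nsmul_eq_mul,
      card_sdiff2_q hij]
    ring
  have Ak : ∀ i j k : Fin n, i ≠ j → i ≠ k → j ≠ k →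
      ∑ l, ∑ π : Equiv.Perm (Fin n), dd (π i) (π j) * dd (π k) (π l)
        = 2*γ + ((n:ℚ)-3)*W := by
    intro i j k hij hik hjk
    rw [sum_split3 hij hik hjk
      (fun l => ∑ π : Equiv.Perm (Fin n), dd (π i) (π j) * dd (π k) (π l))]
    have t1 : ∑ π : Equiv.Perm (Fin n), dd (π i) (π j) * dd (π k) (π i) = γ := by
      have e1 : ∀ π : Equiv.Perm (Fin n), dd (π i) (π j) * dd (π k) (π i)
          = dd (π i) (π j) * dd (π i) (π k) := fun π => by rw [dd_comm (π k) (π i)]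
      rw [Finset.sum_congr rfl fun π _ => e1 π, hγ]
      exact inv3 (fun a b c => dd a b * dd a c) hij hik hjk huv huy hvy
    have t2 : ∑ π : Equiv.Perm (Fin n), dd (π i) (π j) * dd (π k) (π j) = γ := by
      have e1 : ∀ π : Equiv.Perm (Fin n), dd (π i) (π j) * dd (π k) (π j)
          = dd (π j) (π i) * dd (π j) (π k) := fun π => by
        rw [dd_comm (π i) (π j), dd_comm (π k) (π j)]
      rw [Finset.sum_congr rfl fun π _ => e1 π, hγ]
      exact inv3 (fun a b c => dd a b * dd a c) (Ne.symm hij) hjk hik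
        huv huy hvy
    have t3 : ∑ π : Equiv.Perm (Fin n), dd (π i) (π j) * dd (π k) (π k) = 0 := by
      simp [dd_self]
    have t4 : ∀ l ∈ Finset.univ \ {i, j, k},
        ∑ π : Equiv.Perm (Fin n), dd (π i) (π j) * dd (π k) (π l) = W := by
      intro l hl
      simp only [Finset.mem_sdiff, Finset.mem_insert, Finset.mem_singleton] at hl
      push_neg at hl
      rw [hW]
      exact inv4 (fun a b c e => dd a b * dd c e) hij hik (Ne.symm hl.2.1) hjk
        (Ne.symm hl.2.2.1) (Ne.symm hl.2.2.2) huv hux huy hvx hvy hxy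
    rw [t1, t2, t3, Finset.sum_congr rfl t4, Finset.sum_const, nsmul_eq_mul,
      card_sdiff3_q hij hik hjk]
    ring
  have main : ∀ i j : Fin n, i ≠ j →
      ∑ k, ∑ l, ∑ π : Equiv.Perm (Fin n), dd (π i) (π j) * dd (π k) (π l)
        = 2*β + 2*((n:ℚ)-2)*γ + ((n:ℚ)-2)*(2*γ + ((n:ℚ)-3)*W) := by
    intro i j hij
    rw [sum_split2 hij
      (fun k => ∑ l, ∑ π : Equiv.Perm (Fin n), dd (π i) (π j) * dd (π k) (π l))]
    have t3 : ∀ k ∈ Finset.univ \ {i, j},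
        ∑ l, ∑ π : Equiv.Perm (Fin n), dd (π i) (π j) * dd (π k) (π l)
          = 2*γ + ((n:ℚ)-3)*W := by
      intro k hk
      simp only [Finset.mem_sdiff, Finset.mem_insert, Finset.mem_singleton] at hk
      push_neg at hk
      exact Ak i j k hij (Ne.symm hk.2.1) (Ne.symm hk.2.2)
    rw [Ai i j hij, Aj i j hij, Finset.sum_congr rfl t3, Finset.sum_const,
      nsmul_eq_mul, card_sdiff2_q hij]
    ring
  have step2 : ∀ i : Fin n,
      ∑ j, ∑ k, ∑ l, ∑ π : Equiv.Perm (Fin n), dd (π i) (π j) * dd (π k) (π l)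
        = ((n:ℚ)-1) * (2*β + 2*((n:ℚ)-2)*γ + ((n:ℚ)-2)*(2*γ + ((n:ℚ)-3)*W)) := by
    intro i
    rw [sum_split_erase i
      (fun j => ∑ k, ∑ l, ∑ π : Equiv.Perm (Fin n), dd (π i) (π j) * dd (π k) (π l))]
    have z : ∑ k, ∑ l, ∑ π : Equiv.Perm (Fin n), dd (π i) (π i) * dd (π k) (π l) = 0 := by
      simp [dd_self]
    have h1 : ∀ j ∈ Finset.univ.erase i,
        ∑ k, ∑ l, ∑ π : Equiv.Perm (Fin n), dd (π i) (π j) * dd (π k) (π l)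
          = 2*β + 2*((n:ℚ)-2)*γ + ((n:ℚ)-2)*(2*γ + ((n:ℚ)-3)*W) := by
      intro j hj
      exact main i j (Ne.symm (Finset.mem_erase.mp hj).1)
    rw [z, Finset.sum_congr rfl h1, Finset.sum_const, nsmul_eq_mul, card_erase_q i hn1]
    ring
  rw [Finset.sum_congr rfl fun i _ => step2 i, Finset.sum_const, Finset.card_univ,
    Fintype.card_fin, nsmul_eq_mul]
  ring



lemma sumA_fin : ∑ i : Fin n, ∑ j : Fin n, dd i j = ((n:ℚ)^3 - (n:ℚ))/3 := by
  have inner : ∀ i : Fin n, ∑ j : Fin n, dd i j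
      = ∑ j ∈ Finset.range n, |(((i:ℕ):ℚ)) - ((j:ℕ):ℚ)| := by
    intro i
    simp only [dd]
    exact Fin.sum_univ_eq_sum_range (fun j => |(((i:ℕ):ℚ)) - ((j:ℕ):ℚ)|) n
  rw [Finset.sum_congr rfl fun i _ => inner i]
  rw [Fin.sum_univ_eq_sum_range
    (fun i => ∑ j ∈ Finset.range n, |((i:ℚ)) - ((j:ℕ):ℚ)|) n]
  exact sumAr n

lemma sumB_fin : ∑ i : Fin n, ∑ j : Fin n, dd i j ^ 2 = ((n:ℚ)^4 - (n:ℚ)^2)/6 := by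
  have inner : ∀ i : Fin n, ∑ j : Fin n, dd i j ^ 2
      = ∑ j ∈ Finset.range n, (((i:ℕ):ℚ) - ((j:ℕ):ℚ))^2 := by
    intro i
    simp only [dd, sq_abs]
    exact Fin.sum_univ_eq_sum_range (fun j => ((((i:ℕ):ℚ)) - ((j:ℕ):ℚ))^2) n
  rw [Finset.sum_congr rfl fun i _ => inner i]
  rw [Fin.sum_univ_eq_sum_range
    (fun i => ∑ j ∈ Finset.range n, (((i:ℚ)) - ((j:ℕ):ℚ))^2) n]
  exact sumBr n

lemma sumC_fin : ∑ i : Fin n, ∑ j : Fin n, ∑ k : Fin n, dd i j * dd i k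
    = (7*(n:ℚ)^5 - 15*(n:ℚ)^3 + 8*(n:ℚ))/60 := by
  have inner : ∀ i : Fin n, ∑ j : Fin n, ∑ k : Fin n, dd i j * dd i k
      = (∑ j ∈ Finset.range n, |(((i:ℕ):ℚ)) - ((j:ℕ):ℚ)|)^2 := by
    intro i
    have : ∑ j : Fin n, dd i j = ∑ j ∈ Finset.range n, |(((i:ℕ):ℚ)) - ((j:ℕ):ℚ)| := by
      simp only [dd]
      exact Fin.sum_univ_eq_sum_range (fun j => |(((i:ℕ):ℚ)) - ((j:ℕ):ℚ)|) n
    rw [← this, sq, Finset.sum_mul_sum]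
  rw [Finset.sum_congr rfl fun i _ => inner i]
  rw [Fin.sum_univ_eq_sum_range
    (fun i => (∑ j ∈ Finset.range n, |((i:ℚ)) - ((j:ℕ):ℚ)|)^2) n]
  exact sumCr n


lemma cast_ne_zero_sub {m : ℕ} (k : ℕ) (h : k < m) : ((m:ℚ)) - (k:ℚ) ≠ 0 := by
  have : (k:ℚ) < (m:ℚ) := by exact_mod_cast h
  linarith

lemma aval {u v : Fin n} (huv : u ≠ v) :
    ∑ π : Equiv.Perm (Fin n), dd (π u) (π v)
      = (Nat.factorial n : ℚ) * (∑ i : Fin n, ∑ j : Fin n, dd i j)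
        / ((n:ℚ) * ((n:ℚ)-1)) := by
  have h := pair_moment (fun a b => dd a b) (fun i => dd_self i) huv
  have hn := two_le huv
  have h0 : (n:ℚ) ≠ 0 := by
    have := cast_ne_zero_sub (m := n) 0 (by omega : 0 < n); simpa using this
  have h1 : (n:ℚ) - 1 ≠ 0 := cast_ne_zero_sub 1 (by omega)
  rw [eq_div_iff (by exact mul_ne_zero h0 h1)]
  linarith [h]

lemma bval {u v : Fin n} (huv : u ≠ v) :
    ∑ π : Equiv.Perm (Fin n), dd (π u) (π v) ^ 2
      = (Nat.factorial n : ℚ) * (∑ i : Fin n, ∑ j : Fin n, dd i j ^ 2)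
        / ((n:ℚ) * ((n:ℚ)-1)) := by
  have h := pair_moment (fun a b => dd a b ^ 2) (fun i => by simp [dd_self]) huv
  have hn := two_le huv
  have h0 : (n:ℚ) ≠ 0 := by
    have := cast_ne_zero_sub (m := n) 0 (by omega : 0 < n); simpa using this
  have h1 : (n:ℚ) - 1 ≠ 0 := cast_ne_zero_sub 1 (by omega)
  rw [eq_div_iff (by exact mul_ne_zero h0 h1)]
  linarith [h]

lemma gval {u v y : Fin n} (huv : u ≠ v) (huy : u ≠ y) (hvy : v ≠ y) :
    ∑ π : Equiv.Perm (Fin n), dd (π u) (π v) * dd (π u) (π y)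
      = (Nat.factorial n : ℚ)
          * ((∑ i : Fin n, ∑ j : Fin n, ∑ k : Fin n, dd i j * dd i k)
              - ∑ i : Fin n, ∑ j : Fin n, dd i j ^ 2)
        / ((n:ℚ) * ((n:ℚ)-1) * ((n:ℚ)-2)) := by
  have h := triple_moment (fun a b c => dd a b * dd a c)
    (fun i k => by simp [dd_self]) (fun i j => by simp [dd_self]) huv huy hvy
  beta_reduce at h
  have hb : ∑ π : Equiv.Perm (Fin n), dd (π u) (π v) * dd (π u) (π v)
      = (Nat.factorial n : ℚ) * (∑ i : Fin n, ∑ j : Fin n, dd i j ^ 2)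
        / ((n:ℚ) * ((n:ℚ)-1)) := by
    rw [show (∑ π : Equiv.Perm (Fin n), dd (π u) (π v) * dd (π u) (π v))
        = ∑ π : Equiv.Perm (Fin n), dd (π u) (π v) ^ 2 from
      Finset.sum_congr rfl fun π _ => (sq (dd (π u) (π v))).symm]
    exact bval huv
  have hn := three_le huv huy hvy
  have h0 : (n:ℚ) ≠ 0 := by
    have := cast_ne_zero_sub (m := n) 0 (by omega : 0 < n); simpa using this
  have h1 : (n:ℚ) - 1 ≠ 0 := cast_ne_zero_sub 1 (by omega)
  have h2 : (n:ℚ) - 2 ≠ 0 := by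
    have := cast_ne_zero_sub (m := n) 2 (by omega); exact_mod_cast this
  rw [hb] at h
  have e1 : (n:ℚ)*((n:ℚ)-1)
      * ((Nat.factorial n : ℚ) * (∑ i : Fin n, ∑ j : Fin n, dd i j ^ 2)
          / ((n:ℚ) * ((n:ℚ)-1)))
      = (Nat.factorial n : ℚ) * (∑ i : Fin n, ∑ j : Fin n, dd i j ^ 2) := by
    field_simp
  rw [e1] at h
  rw [eq_div_iff (by exact mul_ne_zero (mul_ne_zero h0 h1) h2)]
  linear_combination -h

lemma wval {u v x y : Fin n} (huv : u ≠ v) (hux : u ≠ x) (huy : u ≠ y)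
    (hvx : v ≠ x) (hvy : v ≠ y) (hxy : x ≠ y) :
    ∑ π : Equiv.Perm (Fin n), dd (π u) (π v) * dd (π x) (π y)
      = (Nat.factorial n : ℚ)
          * ((∑ i : Fin n, ∑ j : Fin n, dd i j)^2
              - 2 * (∑ i : Fin n, ∑ j : Fin n, dd i j ^ 2)
              - 4 * ((∑ i : Fin n, ∑ j : Fin n, ∑ k : Fin n, dd i j * dd i k)
                      - ∑ i : Fin n, ∑ j : Fin n, dd i j ^ 2))
        / ((n:ℚ) * ((n:ℚ)-1) * ((n:ℚ)-2) * ((n:ℚ)-3)) := by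
  have h := quad_moment huv hux huy hvx hvy hxy
  beta_reduce at h
  have hb := bval huv
  have hg := gval huv huy hvy
  have hn := four_le huv hux huy hvx hvy hxy
  have h0 : (n:ℚ) ≠ 0 := by
    have := cast_ne_zero_sub (m := n) 0 (by omega : 0 < n); simpa using this
  have h1 : (n:ℚ) - 1 ≠ 0 := cast_ne_zero_sub 1 (by omega)
  have h2 : (n:ℚ) - 2 ≠ 0 := by
    have := cast_ne_zero_sub (m := n) 2 (by omega); exact_mod_cast this
  have h3 : (n:ℚ) - 3 ≠ 0 := by
    have := cast_ne_zero_sub (m := n) 3 (by omega); exact_mod_cast this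
  rw [hb, hg] at h
  have e1 : 2*(n:ℚ)*((n:ℚ)-1)
      * ((Nat.factorial n : ℚ) * (∑ i : Fin n, ∑ j : Fin n, dd i j ^ 2)
          / ((n:ℚ) * ((n:ℚ)-1)))
      = 2 * (Nat.factorial n : ℚ) * (∑ i : Fin n, ∑ j : Fin n, dd i j ^ 2) := by
    field_simp
  have e2 : 4*(n:ℚ)*((n:ℚ)-1)*((n:ℚ)-2)
      * ((Nat.factorial n : ℚ)
          * ((∑ i : Fin n, ∑ j : Fin n, ∑ k : Fin n, dd i j * dd i k)
              - ∑ i : Fin n, ∑ j : Fin n, dd i j ^ 2)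
          / ((n:ℚ) * ((n:ℚ)-1) * ((n:ℚ)-2)))
      = 4 * (Nat.factorial n : ℚ)
          * ((∑ i : Fin n, ∑ j : Fin n, ∑ k : Fin n, dd i j * dd i k)
              - ∑ i : Fin n, ∑ j : Fin n, dd i j ^ 2) := by
    field_simp
  rw [e1, e2] at h
  rw [eq_div_iff (by exact mul_ne_zero (mul_ne_zero (mul_ne_zero h0 h1) h2) h3)]
  linear_combination -h


noncomputable def AFq (n : ℕ) : ℚ := ∑ i : Fin n, ∑ j : Fin n, dd i j
noncomputable def BFq (n : ℕ) : ℚ := ∑ i : Fin n, ∑ j : Fin n, dd i j ^ 2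
noncomputable def CFq (n : ℕ) : ℚ := ∑ i : Fin n, ∑ j : Fin n, ∑ k : Fin n, dd i j * dd i k

noncomputable def Alq (n : ℕ) : ℚ := (Nat.factorial n : ℚ) * AFq n / ((n:ℚ) * ((n:ℚ)-1))
noncomputable def Beq (n : ℕ) : ℚ := (Nat.factorial n : ℚ) * BFq n / ((n:ℚ) * ((n:ℚ)-1))
noncomputable def Gaq (n : ℕ) : ℚ :=
  (Nat.factorial n : ℚ) * (CFq n - BFq n) / ((n:ℚ) * ((n:ℚ)-1) * ((n:ℚ)-2))
noncomputable def Wq (n : ℕ) : ℚ :=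
  (Nat.factorial n : ℚ) * (AFq n ^ 2 - 2 * BFq n - 4 * (CFq n - BFq n))
    / ((n:ℚ) * ((n:ℚ)-1) * ((n:ℚ)-2) * ((n:ℚ)-3))

lemma aval' {u v : Fin n} (huv : u ≠ v) :
    ∑ π : Equiv.Perm (Fin n), dd (π u) (π v) = Alq n := by
  unfold Alq AFq; exact aval huv

lemma bval' {u v : Fin n} (huv : u ≠ v) :
    ∑ π : Equiv.Perm (Fin n), dd (π u) (π v) ^ 2 = Beq n := by
  unfold Beq BFq; exact bval huv

lemma gval' {u v y : Fin n} (huv : u ≠ v) (huy : u ≠ y) (hvy : v ≠ y) :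
    ∑ π : Equiv.Perm (Fin n), dd (π u) (π v) * dd (π u) (π y) = Gaq n := by
  unfold Gaq CFq BFq; exact gval huv huy hvy

lemma wval' {u v x y : Fin n} (huv : u ≠ v) (hux : u ≠ x) (huy : u ≠ y)
    (hvx : v ≠ x) (hvy : v ≠ y) (hxy : x ≠ y) :
    ∑ π : Equiv.Perm (Fin n), dd (π u) (π v) * dd (π x) (π y) = Wq n := by
  unfold Wq AFq CFq BFq; exact wval huv hux huy hvx hvy hxy

lemma sq_sum {u v : Fin n} :
    ∑ π : Equiv.Perm (Fin n), dd (π u) (π v) * dd (π u) (π v)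
      = ∑ π : Equiv.Perm (Fin n), dd (π u) (π v) ^ 2 :=
  Finset.sum_congr rfl fun π _ => (sq (dd (π u) (π v))).symm

lemma per_tuple (G : SimpleGraph (Fin n)) [DecidableRel G.Adj]
    {u v x z : Fin n} (h1 : G.Adj u v) (h2 : G.Adj x z) :
    ∑ π : Equiv.Perm (Fin n), dd (π u) (π v) * dd (π x) (π z)
      = Wq n
        + (Gaq n - Wq n) * ((if x = u then (1:ℚ) else 0) + (if x = v then (1:ℚ) else 0)
            + (if z = u then (1:ℚ) else 0) + (if z = v then (1:ℚ) else 0))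
        + (Beq n + Wq n - 2 * Gaq n)
            * ((if x = u then (1:ℚ) else 0) * (if z = v then (1:ℚ) else 0)
              + (if x = v then (1:ℚ) else 0) * (if z = u then (1:ℚ) else 0)) := by
  have huv : u ≠ v := G.ne_of_adj h1
  have hxz : x ≠ z := G.ne_of_adj h2
  by_cases exu : x = u
  · subst exu
    by_cases ezv : z = v
    · subst ezv
      rw [sq_sum, bval' huv]
      split_ifs <;> first | ring1 | simp_all
    · rw [gval' huv hxz fun h => ezv (h ▸ rfl)]
      split_ifs <;> first | ring1 | simp_all
  · by_cases exv : x = v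
    · subst exv
      by_cases ezu : z = u
      · subst ezu
        have e : ∀ π : Equiv.Perm (Fin n), dd (π z) (π x) * dd (π x) (π z)
            = dd (π z) (π x) * dd (π z) (π x) := fun π => by rw [dd_comm (π x) (π z)]
        rw [Finset.sum_congr rfl fun π _ => e π, sq_sum, bval' hxz.symm]
        split_ifs <;> first | ring1 | simp_all
      · have e : ∀ π : Equiv.Perm (Fin n), dd (π u) (π x) * dd (π x) (π z)
            = dd (π x) (π u) * dd (π x) (π z) := fun π => by rw [dd_comm (π u) (π x)]
        rw [Finset.sum_congr rfl fun π _ => e π, gval' (Ne.symm huv) hxz (Ne.symm ezu)]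
        split_ifs <;> first | ring1 | simp_all
    · by_cases ezu : z = u
      · subst ezu
        have e : ∀ π : Equiv.Perm (Fin n), dd (π z) (π v) * dd (π x) (π z)
            = dd (π z) (π v) * dd (π z) (π x) := fun π => by rw [dd_comm (π x) (π z)]
        rw [Finset.sum_congr rfl fun π _ => e π, gval' huv (Ne.symm exu) (Ne.symm exv)]
        split_ifs <;> first | ring1 | simp_all
      · by_cases ezv : z = v
        · subst ezv
          have e : ∀ π : Equiv.Perm (Fin n), dd (π u) (π z) * dd (π x) (π z)
              = dd (π z) (π u) * dd (π z) (π x) := fun π => by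
            rw [dd_comm (π u) (π z), dd_comm (π x) (π z)]
          rw [Finset.sum_congr rfl fun π _ => e π,
            gval' (Ne.symm huv) (Ne.symm exv) (Ne.symm exu)]
          split_ifs <;> first | ring1 | simp_all
        · rw [wval' huv (Ne.symm exu) (Ne.symm ezu) (Ne.symm exv) (Ne.symm ezv) hxz]
          split_ifs <;> first | ring1 | simp_all


section Graph

variable (G : SimpleGraph (Fin n)) [DecidableRel G.Adj]

/-- adjacency indicator -/
def aQ (u v : Fin n) : ℚ := if G.Adj u v then 1 else 0

lemma aQ_symm (u v : Fin n) : aQ G u v = aQ G v u := by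
  unfold aQ
  by_cases h : G.Adj u v
  · rw [if_pos h, if_pos (G.adj_symm h)]
  · rw [if_neg h, if_neg (fun h' => h (G.adj_symm h'))]

lemma aQ_sq (u v : Fin n) : aQ G u v * aQ G u v = aQ G u v := by
  unfold aQ; by_cases h : G.Adj u v <;> simp [h]

lemma aQ_row (u : Fin n) : ∑ v : Fin n, aQ G u v = (G.degree u : ℚ) := by
  unfold aQ
  rw [Finset.sum_boole]
  congr 1
  rw [← SimpleGraph.neighborFinset_eq_filter]
  rfl

lemma aQ_col (v : Fin n) : ∑ u : Fin n, aQ G u v = (G.degree v : ℚ) := by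
  rw [Finset.sum_congr rfl fun u _ => aQ_symm G u v]
  exact aQ_row G v

lemma collapse_x (u : Fin n) (g : Fin n → ℚ) :
    ∑ x : Fin n, (if x = u then (1:ℚ) else 0) * g x = g u := by
  have : ∀ x : Fin n, (if x = u then (1:ℚ) else 0) * g x
      = if x = u then g x else 0 := by
    intro x; by_cases h : x = u <;> simp [h]
  rw [Finset.sum_congr rfl fun x _ => this x, Finset.sum_ite_eq' Finset.univ u g,
    if_pos (Finset.mem_univ u)]

lemma first_moment :
    ∑ π : Equiv.Perm (Fin n), (∑ u : Fin n, ∑ v : Fin n,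
        if G.Adj u v then dd (π u) (π v) else 0)
      = Alq n * ∑ u : Fin n, (G.degree u : ℚ) := by
  rw [Finset.sum_comm]
  have h1 : ∀ u : Fin n, ∑ π : Equiv.Perm (Fin n), ∑ v : Fin n,
      (if G.Adj u v then dd (π u) (π v) else 0)
      = ∑ v : Fin n, ∑ π : Equiv.Perm (Fin n),
        (if G.Adj u v then dd (π u) (π v) else 0) := fun u => Finset.sum_comm
  rw [Finset.sum_congr rfl fun u _ => h1 u]
  have h2 : ∀ u v : Fin n, ∑ π : Equiv.Perm (Fin n),
      (if G.Adj u v then dd (π u) (π v) else 0) = aQ G u v * Alq n := by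
    intro u v
    by_cases h : G.Adj u v
    · rw [Finset.sum_congr rfl fun π _ => if_pos h, aval' (G.ne_of_adj h)]
      unfold aQ; rw [if_pos h, one_mul]
    · rw [Finset.sum_congr rfl fun π _ => if_neg h]
      unfold aQ; rw [if_neg h, zero_mul, Finset.sum_const_zero]
  rw [Finset.sum_congr rfl fun u _ =>
    Finset.sum_congr rfl fun v _ => h2 u v]
  rw [Finset.sum_congr rfl fun u _ => (Finset.sum_mul _ _ _).symm, ← Finset.sum_mul]
  rw [Finset.sum_congr rfl fun u _ => aQ_row G u]
  ring

lemma second_moment :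
    ∑ π : Equiv.Perm (Fin n), (∑ u : Fin n, ∑ v : Fin n,
        if G.Adj u v then dd (π u) (π v) else 0) ^ 2
      = Wq n * (∑ u : Fin n, (G.degree u : ℚ))^2
        + (Gaq n - Wq n) * (4 * ∑ u : Fin n, (G.degree u : ℚ)^2)
        + (Beq n + Wq n - 2 * Gaq n) * (2 * ∑ u : Fin n, (G.degree u : ℚ)) := by
  -- expand the square into a fourfold sum
  have hsq : ∀ π : Equiv.Perm (Fin n),
      (∑ u : Fin n, ∑ v : Fin n, if G.Adj u v then dd (π u) (π v) else 0) ^ 2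
      = ∑ u : Fin n, ∑ v : Fin n, ∑ x : Fin n, ∑ z : Fin n,
          (if G.Adj u v then dd (π u) (π v) else 0)
            * (if G.Adj x z then dd (π x) (π z) else 0) := by
    intro π
    rw [sq, Finset.sum_mul]
    refine Finset.sum_congr rfl fun u _ => ?_
    rw [Finset.sum_mul]
    refine Finset.sum_congr rfl fun v _ => ?_
    rw [Finset.mul_sum]
    refine Finset.sum_congr rfl fun x _ => ?_
    rw [Finset.mul_sum]
  rw [Finset.sum_congr rfl fun π _ => hsq π]
  -- swap the permutation sum inside
  have hswap : ∑ π : Equiv.Perm (Fin n), ∑ u : Fin n, ∑ v : Fin n, ∑ x : Fin n, ∑ z : Fin n,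
        (if G.Adj u v then dd (π u) (π v) else 0)
          * (if G.Adj x z then dd (π x) (π z) else 0)
      = ∑ u : Fin n, ∑ v : Fin n, ∑ x : Fin n, ∑ z : Fin n, ∑ π : Equiv.Perm (Fin n),
        (if G.Adj u v then dd (π u) (π v) else 0)
          * (if G.Adj x z then dd (π x) (π z) else 0) := by
    rw [Finset.sum_comm]
    refine Finset.sum_congr rfl fun u _ => ?_
    rw [Finset.sum_comm]
    refine Finset.sum_congr rfl fun v _ => ?_
    rw [Finset.sum_comm]
    refine Finset.sum_congr rfl fun x _ => ?_
    exact Finset.sum_comm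
  rw [hswap]
  -- per tuple evaluation
  have key : ∀ u v x z : Fin n,
      (∑ π : Equiv.Perm (Fin n),
        (if G.Adj u v then dd (π u) (π v) else 0)
          * (if G.Adj x z then dd (π x) (π z) else 0))
      = aQ G u v * (aQ G x z
          * (Wq n
            + (Gaq n - Wq n) * ((if x = u then (1:ℚ) else 0) + (if x = v then (1:ℚ) else 0)
                + (if z = u then (1:ℚ) else 0) + (if z = v then (1:ℚ) else 0))
            + (Beq n + Wq n - 2 * Gaq n)
                * ((if x = u then (1:ℚ) else 0) * (if z = v then (1:ℚ) else 0)
                  + (if x = v then (1:ℚ) else 0) * (if z = u then (1:ℚ) else 0)))) := by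
    intro u v x z
    by_cases hA : G.Adj u v
    · by_cases hB : G.Adj x z
      · have : ∀ π : Equiv.Perm (Fin n),
            (if G.Adj u v then dd (π u) (π v) else 0)
              * (if G.Adj x z then dd (π x) (π z) else 0)
            = dd (π u) (π v) * dd (π x) (π z) := by
          intro π; rw [if_pos hA, if_pos hB]
        rw [Finset.sum_congr rfl fun π _ => this π, per_tuple G hA hB]
        unfold aQ; rw [if_pos hA, if_pos hB, one_mul, one_mul]
      · have : ∀ π : Equiv.Perm (Fin n),
            (if G.Adj u v then dd (π u) (π v) else 0)
              * (if G.Adj x z then dd (π x) (π z) else 0) = 0 := by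
          intro π; rw [if_neg hB, mul_zero]
        rw [Finset.sum_congr rfl fun π _ => this π, Finset.sum_const_zero]
        unfold aQ; rw [if_neg hB, zero_mul, mul_zero]
    · have : ∀ π : Equiv.Perm (Fin n),
          (if G.Adj u v then dd (π u) (π v) else 0)
            * (if G.Adj x z then dd (π x) (π z) else 0) = 0 := by
        intro π; rw [if_neg hA, zero_mul]
      rw [Finset.sum_congr rfl fun π _ => this π, Finset.sum_const_zero]
      unfold aQ; rw [if_neg hA, zero_mul]
  rw [Finset.sum_congr rfl fun u _ => Finset.sum_congr rfl fun v _ =>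
    Finset.sum_congr rfl fun x _ => Finset.sum_congr rfl fun z _ => key u v x z]
  -- now evaluate the inner double sum over (x, z) for fixed (u, v)
  have inner : ∀ u v : Fin n,
      ∑ x : Fin n, ∑ z : Fin n, (aQ G x z
          * (Wq n
            + (Gaq n - Wq n) * ((if x = u then (1:ℚ) else 0) + (if x = v then (1:ℚ) else 0)
                + (if z = u then (1:ℚ) else 0) + (if z = v then (1:ℚ) else 0))
            + (Beq n + Wq n - 2 * Gaq n)
                * ((if x = u then (1:ℚ) else 0) * (if z = v then (1:ℚ) else 0)
                  + (if x = v then (1:ℚ) else 0) * (if z = u then (1:ℚ) else 0))))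
      = Wq n * (∑ w : Fin n, (G.degree w : ℚ))
        + (Gaq n - Wq n) * (2*(G.degree u : ℚ) + 2*(G.degree v : ℚ))
        + (Beq n + Wq n - 2 * Gaq n) * (2 * aQ G u v) := by
    intro u v
    have expand : ∀ x z : Fin n, (aQ G x z
          * (Wq n
            + (Gaq n - Wq n) * ((if x = u then (1:ℚ) else 0) + (if x = v then (1:ℚ) else 0)
                + (if z = u then (1:ℚ) else 0) + (if z = v then (1:ℚ) else 0))
            + (Beq n + Wq n - 2 * Gaq n)
                * ((if x = u then (1:ℚ) else 0) * (if z = v then (1:ℚ) else 0)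
                  + (if x = v then (1:ℚ) else 0) * (if z = u then (1:ℚ) else 0))))
        = Wq n * aQ G x z
          + (Gaq n - Wq n) * ((if x = u then (1:ℚ) else 0) * aQ G x z)
          + (Gaq n - Wq n) * ((if x = v then (1:ℚ) else 0) * aQ G x z)
          + (Gaq n - Wq n) * ((if z = u then (1:ℚ) else 0) * aQ G x z)
          + (Gaq n - Wq n) * ((if z = v then (1:ℚ) else 0) * aQ G x z)
          + (Beq n + Wq n - 2 * Gaq n)
              * ((if x = u then (1:ℚ) else 0) * ((if z = v then (1:ℚ) else 0) * aQ G x z))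
          + (Beq n + Wq n - 2 * Gaq n)
              * ((if x = v then (1:ℚ) else 0) * ((if z = u then (1:ℚ) else 0) * aQ G x z)) := by
      intro x z; ring
    rw [Finset.sum_congr rfl fun x _ => Finset.sum_congr rfl fun z _ => expand x z]
    simp only [Finset.sum_add_distrib, ← Finset.mul_sum]
    -- piece 0
    have p0 : ∑ x : Fin n, ∑ z : Fin n, aQ G x z = ∑ w : Fin n, (G.degree w : ℚ) :=
      Finset.sum_congr rfl fun x _ => aQ_row G x
    -- piece x = u
    have p1 : ∑ x : Fin n, (if x = u then (1:ℚ) else 0) * ∑ z : Fin n, aQ G x z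
        = (G.degree u : ℚ) := by
      rw [Finset.sum_congr rfl fun x _ => by rw [aQ_row G x]]
      exact collapse_x u (fun x => (G.degree x : ℚ))
    have p2 : ∑ x : Fin n, (if x = v then (1:ℚ) else 0) * ∑ z : Fin n, aQ G x z
        = (G.degree v : ℚ) := by
      rw [Finset.sum_congr rfl fun x _ => by rw [aQ_row G x]]
      exact collapse_x v (fun x => (G.degree x : ℚ))
    have p3 : ∑ x : Fin n, ∑ z : Fin n, (if z = u then (1:ℚ) else 0) * aQ G x z
        = (G.degree u : ℚ) := by
      have : ∀ x : Fin n, ∑ z : Fin n, (if z = u then (1:ℚ) else 0) * aQ G x z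
          = aQ G x u := by
        intro x; rw [collapse_x u (fun z => aQ G x z)]
      rw [Finset.sum_congr rfl fun x _ => this x, aQ_col G u]
    have p4 : ∑ x : Fin n, ∑ z : Fin n, (if z = v then (1:ℚ) else 0) * aQ G x z
        = (G.degree v : ℚ) := by
      have : ∀ x : Fin n, ∑ z : Fin n, (if z = v then (1:ℚ) else 0) * aQ G x z
          = aQ G x v := by
        intro x; rw [collapse_x v (fun z => aQ G x z)]
      rw [Finset.sum_congr rfl fun x _ => this x, aQ_col G v]
    have p5 : ∑ x : Fin n,
        (if x = u then (1:ℚ) else 0) * ∑ z : Fin n, ((if z = v then (1:ℚ) else 0) * aQ G x z)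
        = aQ G u v := by
      rw [Finset.sum_congr rfl fun x _ => by rw [collapse_x v (fun z => aQ G x z)]]
      exact collapse_x u (fun x => aQ G x v)
    have p6 : ∑ x : Fin n,
        (if x = v then (1:ℚ) else 0) * ∑ z : Fin n, ((if z = u then (1:ℚ) else 0) * aQ G x z)
        = aQ G u v := by
      rw [Finset.sum_congr rfl fun x _ => by rw [collapse_x u (fun z => aQ G x z)]]
      rw [collapse_x v (fun x => aQ G x u), aQ_symm G v u]
    rw [p0, p1, p2, p3, p4, p5, p6]
    ring
  rw [Finset.sum_congr rfl fun u _ => Finset.sum_congr rfl fun v _ => by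
    rw [Finset.sum_congr rfl fun x (_ : x ∈ Finset.univ) =>
      (Finset.mul_sum Finset.univ (fun z => aQ G x z
          * (Wq n
            + (Gaq n - Wq n) * ((if x = u then (1:ℚ) else 0) + (if x = v then (1:ℚ) else 0)
                + (if z = u then (1:ℚ) else 0) + (if z = v then (1:ℚ) else 0))
            + (Beq n + Wq n - 2 * Gaq n)
                * ((if x = u then (1:ℚ) else 0) * (if z = v then (1:ℚ) else 0)
                  + (if x = v then (1:ℚ) else 0) * (if z = u then (1:ℚ) else 0))))
        (aQ G u v)).symm,
      ← Finset.mul_sum, inner u v]]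
  -- final summation over (u, v)
  have final : ∀ u : Fin n, ∑ v : Fin n, aQ G u v
        * (Wq n * (∑ w : Fin n, (G.degree w : ℚ))
          + (Gaq n - Wq n) * (2*(G.degree u : ℚ) + 2*(G.degree v : ℚ))
          + (Beq n + Wq n - 2 * Gaq n) * (2 * aQ G u v))
      = Wq n * (∑ w : Fin n, (G.degree w : ℚ)) * (G.degree u : ℚ)
        + (Gaq n - Wq n) * (2*(G.degree u : ℚ)*(G.degree u : ℚ)
            + 2*(∑ v : Fin n, aQ G u v * (G.degree v : ℚ)))
        + (Beq n + Wq n - 2 * Gaq n) * (2 * (G.degree u : ℚ)) := by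
    intro u
    have expand : ∀ v : Fin n, aQ G u v
        * (Wq n * (∑ w : Fin n, (G.degree w : ℚ))
          + (Gaq n - Wq n) * (2*(G.degree u : ℚ) + 2*(G.degree v : ℚ))
          + (Beq n + Wq n - 2 * Gaq n) * (2 * aQ G u v))
        = Wq n * (∑ w : Fin n, (G.degree w : ℚ)) * aQ G u v
          + (Gaq n - Wq n) * (2*(G.degree u : ℚ)) * aQ G u v
          + (Gaq n - Wq n) * 2 * (aQ G u v * (G.degree v : ℚ))
          + (Beq n + Wq n - 2 * Gaq n) * 2 * (aQ G u v * aQ G u v) := by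
      intro v; ring
    rw [Finset.sum_congr rfl fun v _ => expand v]
    simp only [Finset.sum_add_distrib, ← Finset.mul_sum]
    rw [Finset.sum_congr rfl fun v _ => aQ_sq G u v, aQ_row G u]
    ring
  rw [Finset.sum_congr rfl fun u _ => final u]
  simp only [Finset.sum_add_distrib, ← Finset.mul_sum]
  have q1 : ∑ u : Fin n, (∑ w : Fin n, (G.degree w : ℚ)) * (G.degree u : ℚ)
      = (∑ w : Fin n, (G.degree w : ℚ))^2 := by
    rw [← Finset.mul_sum]; ring
  have q2 : ∑ u : Fin n, ∑ v : Fin n, aQ G u v * (G.degree v : ℚ)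
      = ∑ v : Fin n, (G.degree v : ℚ)^2 := by
    rw [Finset.sum_comm]
    refine Finset.sum_congr rfl fun v _ => ?_
    rw [← Finset.sum_mul, aQ_col G v]
    ring
  rw [q2]
  have q3 : ∑ x : Fin n, 2 * (G.degree x : ℚ) * (G.degree x : ℚ)
      = 2 * ∑ x : Fin n, (G.degree x : ℚ)^2 := by
    rw [Finset.mul_sum]
    exact Finset.sum_congr rfl fun x _ => by ring
  rw [q3]
  ring

end Graph


lemma deg_pos (G : SimpleGraph (Fin n)) [DecidableRel G.Adj] (hc : G.Connected)
    (hn : 2 ≤ n) (w : Fin n) : 0 < G.degree w := by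
  rw [SimpleGraph.degree_pos_iff_exists_adj]
  have : ∃ w' : Fin n, w' ≠ w := by
    refine Fintype.exists_ne_of_one_lt_card ?_ w
    simp only [Fintype.card_fin]; omega
  obtain ⟨w', hw'⟩ := this
  obtain ⟨p⟩ := hc.preconnected w w'
  cases p with
  | nil => exact absurd rfl (Ne.symm hw')
  | cons h _ => exact ⟨_, h⟩

lemma handshake (G : SimpleGraph (Fin n)) [DecidableRel G.Adj] (hG : G.IsTree)
    (hn : 2 ≤ n) :
    ∑ u : Fin n, (G.degree u : ℚ) = 2 * ((n:ℚ) - 1) := by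
  classical
  have h1 : ∑ u : Fin n, G.degree u = 2 * G.edgeFinset.card :=
    SimpleGraph.sum_degrees_eq_twice_card_edges G
  have h2 : G.edgeFinset.card + 1 = n := by
    have := hG.card_edgeFinset
    simpa using this
  have h3 : ((∑ u : Fin n, G.degree u : ℕ) : ℚ) = ∑ u : Fin n, (G.degree u : ℚ) := by
    push_cast; ring
  rw [← h3, h1]
  have h4 : G.edgeFinset.card = n - 1 := by omega
  rw [h4]
  push_cast [Nat.cast_sub (by omega : 1 ≤ n)]
  ring

end VarAux

open VarAux in
/-- For a tree on `n ≥ 2` vertices with sum of squared degrees `K = Σ_i k_i^2`, the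
variance of the sum of edge lengths `D` in a uniformly random linear arrangement is
`V[D] = ((n+1)/45)[(n-1)^2 + (n/4 - 1) K]`. -/
theorem variance_sum_edge_lengths_tree (n : ℕ) (hn : 2 ≤ n) (G : SimpleGraph (Fin n))
    [DecidableRel G.Adj] (hG : G.IsTree) :
    (∑ π : Equiv.Perm (Fin n),
        ((∑ u : Fin n, ∑ v : Fin n,
          if G.Adj u v then |((π u : ℕ) : ℚ) - ((π v : ℕ) : ℚ)| else 0) / 2) ^ 2)
      / (Nat.factorial n : ℚ)
      - ((∑ π : Equiv.Perm (Fin n),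
          (∑ u : Fin n, ∑ v : Fin n,
            if G.Adj u v then |((π u : ℕ) : ℚ) - ((π v : ℕ) : ℚ)| else 0) / 2)
          / (Nat.factorial n : ℚ)) ^ 2
      = (((n : ℚ) + 1) / 45) *
          (((n : ℚ) - 1) ^ 2
            + ((n : ℚ) / 4 - 1) * ∑ i : Fin n, (G.degree i : ℚ) ^ 2) := by
  classical
  have dd_eq : ∀ a b : Fin n, |((a : ℕ) : ℚ) - ((b : ℕ) : ℚ)| = dd a b := fun _ _ => rfl
  simp only [dd_eq]
  rw [show (∑ π : Equiv.Perm (Fin n),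
        ((∑ u : Fin n, ∑ v : Fin n, if G.Adj u v then dd (π u) (π v) else 0) / 2) ^ 2)
      = (∑ π : Equiv.Perm (Fin n),
        (∑ u : Fin n, ∑ v : Fin n, if G.Adj u v then dd (π u) (π v) else 0) ^ 2) / 4 by
    rw [Finset.sum_div]
    exact Finset.sum_congr rfl fun π _ => by ring]
  rw [show (∑ π : Equiv.Perm (Fin n),
        (∑ u : Fin n, ∑ v : Fin n, if G.Adj u v then dd (π u) (π v) else 0) / 2)
      = (∑ π : Equiv.Perm (Fin n),
        (∑ u : Fin n, ∑ v : Fin n, if G.Adj u v then dd (π u) (π v) else 0)) / 2 by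
    rw [Finset.sum_div]]
  rw [second_moment G, first_moment G, handshake G hG hn]
  have hAF : AFq n = ((n:ℚ)^3 - (n:ℚ))/3 := sumA_fin
  have hBF : BFq n = ((n:ℚ)^4 - (n:ℚ)^2)/6 := sumB_fin
  have hCF : CFq n = (7*(n:ℚ)^5 - 15*(n:ℚ)^3 + 8*(n:ℚ))/60 := sumC_fin
  have hfacpos : (0:ℚ) < (Nat.factorial n : ℚ) := by
    exact_mod_cast Nat.factorial_pos n
  have hfac : (Nat.factorial n : ℚ) ≠ 0 := ne_of_gt hfacpos
  rcases (by omega : n = 2 ∨ n = 3 ∨ 4 ≤ n) with h2 | h3 | h4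
  · -- n = 2
    subst h2
    have hdeg : ∀ w : Fin 2, G.degree w = 1 := by
      intro w
      have hp := deg_pos G hG.isConnected (by norm_num) w
      have hu := SimpleGraph.degree_lt_card_verts (G := G) w
      simp only [Fintype.card_fin] at hu
      omega
    have hK : ∑ i : Fin 2, (G.degree i : ℚ)^2 = 2 := by
      rw [Finset.sum_congr rfl fun i _ => by rw [hdeg i]]
      norm_num
    rw [hK]
    unfold Alq Beq Gaq Wq
    rw [hAF, hBF, hCF]
    norm_num [Nat.factorial]
  · -- n = 3
    subst h3
    have hdeg : ∀ w : Fin 3, 1 ≤ G.degree w ∧ G.degree w ≤ 2 := by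
      intro w
      have hp := deg_pos G hG.isConnected (by norm_num) w
      have hu := SimpleGraph.degree_lt_card_verts (G := G) w
      simp only [Fintype.card_fin] at hu
      omega
    have hsqdeg : ∀ w : Fin 3, (G.degree w : ℚ)^2 = 3*(G.degree w : ℚ) - 2 := by
      intro w
      obtain ⟨h1', h2'⟩ := hdeg w
      interval_cases h : G.degree w <;> norm_num
    have hK : ∑ i : Fin 3, (G.degree i : ℚ)^2 = 6 := by
      rw [Finset.sum_congr rfl fun i _ => hsqdeg i, Finset.sum_sub_distrib,
        ← Finset.mul_sum, handshake G hG (by norm_num)]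
      norm_num
    rw [hK]
    unfold Alq Beq Gaq Wq
    rw [hAF, hBF, hCF]
    norm_num [Nat.factorial]
  · -- n ≥ 4
    have h0 : (n:ℚ) ≠ 0 := by
      have := cast_ne_zero_sub (m := n) 0 (by omega : 0 < n); simpa using this
    have h1 : (n:ℚ) - 1 ≠ 0 := cast_ne_zero_sub 1 (by omega)
    have hh2 : (n:ℚ) - 2 ≠ 0 := by
      have := cast_ne_zero_sub (m := n) 2 (by omega); exact_mod_cast this
    have hh3 : (n:ℚ) - 3 ≠ 0 := by
      have := cast_ne_zero_sub (m := n) 3 (by omega); exact_mod_cast this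
    unfold Alq Beq Gaq Wq
    rw [hAF, hBF, hCF]
    field_simp
    ring
end

section
/- For the star tree S_n on n ≥ 1 vertices (one hub adjacent to the other n-1 leaves), in any linear arrangement in which the hub is at position τ (1 ≤ τ ≤ n), the sum of edge lengths equals D_τ = τ^2 - (n+1)τ + n(n+1)/2. Consequently, E[D^2] over a uniformly random arrangement equals (1/n) Σ_{τ=1}^n D_τ^2 = (n+1)(n-1)(7n^2 - 8)/60, and V[D] = (n+1)(n-1)(n+2)(n-2)/180. -/
open Finset

-- power sums over range n
lemma S1 (n : ℕ) : ∑ k ∈ range n, (k : ℚ) = n * (n - 1) / 2 := by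
  induction n with
  | zero => simp
  | succ m ih => rw [Finset.sum_range_succ, ih]; push_cast; ring

lemma S2 (n : ℕ) : ∑ k ∈ range n, (k : ℚ) ^ 2 = n * (n - 1) * (2 * n - 1) / 6 := by
  induction n with
  | zero => simp
  | succ m ih => rw [Finset.sum_range_succ, ih]; push_cast; ring

lemma S3 (n : ℕ) : ∑ k ∈ range n, (k : ℚ) ^ 3 = (n * (n - 1) / 2) ^ 2 := by
  induction n with
  | zero => simp
  | succ m ih => rw [Finset.sum_range_succ, ih]; push_cast; ring

lemma S4 (n : ℕ) : ∑ k ∈ range n, (k : ℚ) ^ 4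
    = n * (n - 1) * (2 * n - 1) * (3 * n ^ 2 - 3 * n - 1) / 30 := by
  induction n with
  | zero => simp
  | succ m ih => rw [Finset.sum_range_succ, ih]; push_cast; ring

-- sum of |k - t| for t ≤ n
lemma absSum : ∀ (n t : ℕ), t ≤ n →
    ∑ k ∈ range n, |(k : ℚ) - t|
      = ((t : ℚ) * (t + 1) + ((n : ℚ) - t) * ((n : ℚ) - t - 1)) / 2 := by
  intro n
  induction n with
  | zero => intro t ht; interval_cases t; simp
  | succ m ih =>
    intro t ht
    rcases Nat.lt_or_ge t (m + 1) with h1 | h1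
    · have htm : t ≤ m := Nat.lt_succ_iff.mp h1
      rw [Finset.sum_range_succ, ih t htm,
        abs_of_nonneg (by have := (Nat.cast_le (α := ℚ)).mpr htm; linarith)]
      push_cast; ring
    · have : t = m + 1 := le_antisymm ht h1
      subst this
      have : ∑ k ∈ range (m + 1), |(k : ℚ) - (m + 1 : ℕ)|
          = ∑ k ∈ range (m + 1), (((m : ℚ) + 1) - k) := by
        refine Finset.sum_congr rfl fun k hk => ?_
        have hk' : (k : ℚ) ≤ m := by
          exact_mod_cast Nat.lt_succ_iff.mp (Finset.mem_range.mp hk)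
        rw [abs_of_nonpos (by push_cast; linarith)]
        push_cast; ring
      rw [this, Finset.sum_sub_distrib, Finset.sum_const, S1, Finset.card_range]
      push_cast; ring

-- sum over perms of a function of π h
lemma permSum {m : ℕ} (h : Fin (m + 1)) (g : Fin (m + 1) → ℚ) :
    ∑ π : Equiv.Perm (Fin (m + 1)), g (π h)
      = (Nat.factorial m : ℚ) * ∑ t : Fin (m + 1), g t := by
  have step1 : ∑ π : Equiv.Perm (Fin (m + 1)), g (π 0)
      = ∑ π : Equiv.Perm (Fin (m + 1)), g (π h) := by
    refine Fintype.sum_bijective (fun π => π * Equiv.swap 0 h)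
      (Group.mulRight_bijective _) _ _ (fun π => ?_)
    simp [Equiv.Perm.mul_apply]
  rw [← step1, ← Equiv.sum_comp (Equiv.Perm.decomposeFin (n := m)).symm
      (fun π => g (π 0))]
  rw [Fintype.sum_prod_type]
  simp only [Equiv.Perm.decomposeFin_symm_apply_zero, Finset.sum_const,
    Finset.card_univ, Fintype.card_perm, Fintype.card_fin, nsmul_eq_mul]
  rw [← Finset.mul_sum]

lemma sumf (n : ℕ) :
    ∑ τ ∈ Finset.range n,
      (((τ : ℚ) + 1) ^ 2 - ((n : ℚ) + 1) * ((τ : ℚ) + 1) + (n : ℚ) * ((n : ℚ) + 1) / 2)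
    = (n : ℚ) * ((n : ℚ) + 1) * ((n : ℚ) - 1) / 3 := by
  have e : ∀ τ ∈ Finset.range n,
      (((τ : ℚ) + 1) ^ 2 - ((n : ℚ) + 1) * ((τ : ℚ) + 1) + (n : ℚ) * ((n : ℚ) + 1) / 2)
      = (τ : ℚ) ^ 2 + (1 - (n : ℚ)) * (τ : ℚ) + ((n : ℚ) * ((n : ℚ) + 1) / 2 - n) :=
    fun τ _ => by ring
  rw [Finset.sum_congr rfl e, Finset.sum_add_distrib, Finset.sum_add_distrib,
    ← Finset.mul_sum, Finset.sum_const, Finset.card_range, nsmul_eq_mul, S2, S1]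
  ring

lemma sumf2 (n : ℕ) :
    ∑ τ ∈ Finset.range n,
      (((τ : ℚ) + 1) ^ 2 - ((n : ℚ) + 1) * ((τ : ℚ) + 1) + (n : ℚ) * ((n : ℚ) + 1) / 2) ^ 2
    = (n : ℚ) * (((n : ℚ) + 1) * ((n : ℚ) - 1) * (7 * (n : ℚ) ^ 2 - 8) / 60) := by
  have e : ∀ τ ∈ Finset.range n,
      (((τ : ℚ) + 1) ^ 2 - ((n : ℚ) + 1) * ((τ : ℚ) + 1) + (n : ℚ) * ((n : ℚ) + 1) / 2) ^ 2
      = (τ : ℚ) ^ 4 + (2 * (1 - (n : ℚ))) * (τ : ℚ) ^ 3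
        + ((1 - (n : ℚ)) ^ 2 + 2 * ((n : ℚ) * ((n : ℚ) + 1) / 2 - n)) * (τ : ℚ) ^ 2
        + (2 * (1 - (n : ℚ)) * ((n : ℚ) * ((n : ℚ) + 1) / 2 - n)) * (τ : ℚ)
        + ((n : ℚ) * ((n : ℚ) + 1) / 2 - n) ^ 2 :=
    fun τ _ => by ring
  rw [Finset.sum_congr rfl e, Finset.sum_add_distrib, Finset.sum_add_distrib,
    Finset.sum_add_distrib, Finset.sum_add_distrib, ← Finset.mul_sum, ← Finset.mul_sum,
    ← Finset.mul_sum, Finset.sum_const, Finset.card_range, nsmul_eq_mul, S4, S3, S2, S1]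
  ring

/-- For the star tree `S_n` on `n ≥ 1` vertices with hub `h`:
(1) in any linear arrangement `π`, the sum of edge lengths equals
`τ² - (n+1)τ + n(n+1)/2` where `τ = π h + 1` is the position of the hub;
(2) `(1/n) Σ_{τ=1}^n D_τ² = (n+1)(n-1)(7n²-8)/60`;
(3) the variance of `D` in a uniformly random linear arrangement equals
`(n+1)(n-1)(n+2)(n-2)/180`. -/
theorem star_tree_sum_edge_lengths (n : ℕ) (hn : 1 ≤ n) (h : Fin n) :
    (∀ π : Equiv.Perm (Fin n),
        ∑ v ∈ Finset.univ.erase h, |((π v : ℕ) : ℚ) - ((π h : ℕ) : ℚ)|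
          = (((π h : ℕ) : ℚ) + 1) ^ 2 - ((n : ℚ) + 1) * (((π h : ℕ) : ℚ) + 1)
            + (n : ℚ) * ((n : ℚ) + 1) / 2) ∧
    (1 / (n : ℚ)) * (∑ τ ∈ Finset.Icc 1 n,
        ((τ : ℚ) ^ 2 - ((n : ℚ) + 1) * (τ : ℚ) + (n : ℚ) * ((n : ℚ) + 1) / 2) ^ 2)
      = ((n : ℚ) + 1) * ((n : ℚ) - 1) * (7 * (n : ℚ) ^ 2 - 8) / 60 ∧
    (∑ π : Equiv.Perm (Fin n),
        (∑ v ∈ Finset.univ.erase h, |((π v : ℕ) : ℚ) - ((π h : ℕ) : ℚ)|) ^ 2)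
        / (Nat.factorial n : ℚ)
      - ((∑ π : Equiv.Perm (Fin n),
          ∑ v ∈ Finset.univ.erase h, |((π v : ℕ) : ℚ) - ((π h : ℕ) : ℚ)|)
          / (Nat.factorial n : ℚ)) ^ 2
      = ((n : ℚ) + 1) * ((n : ℚ) - 1) * ((n : ℚ) + 2) * ((n : ℚ) - 2) / 180 := by
  have hn0 : (n : ℚ) ≠ 0 := Nat.cast_ne_zero.mpr (by omega)
  have part1 : ∀ π : Equiv.Perm (Fin n),
      ∑ v ∈ Finset.univ.erase h, |((π v : ℕ) : ℚ) - ((π h : ℕ) : ℚ)|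
        = (((π h : ℕ) : ℚ) + 1) ^ 2 - ((n : ℚ) + 1) * (((π h : ℕ) : ℚ) + 1)
          + (n : ℚ) * ((n : ℚ) + 1) / 2 := by
    intro π
    rw [Finset.sum_erase _ (by simp),
      Equiv.sum_comp π (fun w : Fin n => |((w : ℕ) : ℚ) - ((π h : ℕ) : ℚ)|),
      Fin.sum_univ_eq_sum_range (fun k => |(k : ℚ) - ((π h : ℕ) : ℚ)|) n,
      absSum n (π h) (π h).isLt.le]
    ring
  have part2 : (1 / (n : ℚ)) * (∑ τ ∈ Finset.Icc 1 n,
      ((τ : ℚ) ^ 2 - ((n : ℚ) + 1) * (τ : ℚ) + (n : ℚ) * ((n : ℚ) + 1) / 2) ^ 2)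
      = ((n : ℚ) + 1) * ((n : ℚ) - 1) * (7 * (n : ℚ) ^ 2 - 8) / 60 := by
    have e1 : Finset.Icc 1 n = Finset.Ico 1 (n + 1) := (Finset.Ico_add_one_right_eq_Icc 1 n).symm
    rw [e1, Finset.sum_Ico_eq_sum_range]
    simp only [Nat.add_sub_cancel]
    have e2 : ∀ τ ∈ Finset.range n,
        (((1 + τ : ℕ) : ℚ) ^ 2 - ((n : ℚ) + 1) * ((1 + τ : ℕ) : ℚ)
          + (n : ℚ) * ((n : ℚ) + 1) / 2) ^ 2
        = (((τ : ℚ) + 1) ^ 2 - ((n : ℚ) + 1) * ((τ : ℚ) + 1)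
          + (n : ℚ) * ((n : ℚ) + 1) / 2) ^ 2 := fun τ _ => by push_cast; ring
    rw [Finset.sum_congr rfl e2, sumf2]
    field_simp
  refine ⟨part1, part2, ?_⟩
  obtain ⟨m, rfl⟩ : ∃ m, n = m + 1 := ⟨n - 1, (Nat.succ_pred_eq_of_pos hn).symm⟩
  set N : ℚ := ((m + 1 : ℕ) : ℚ) with hN
  have hsum : (∑ π : Equiv.Perm (Fin (m + 1)),
      ∑ v ∈ Finset.univ.erase h, |((π v : ℕ) : ℚ) - ((π h : ℕ) : ℚ)|)
      = (Nat.factorial m : ℚ) * (N * (N + 1) * (N - 1) / 3) := by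
    rw [Finset.sum_congr rfl fun π _ => part1 π]
    rw [permSum h (fun t : Fin (m + 1) => (((t : ℕ) : ℚ) + 1) ^ 2
        - (N + 1) * (((t : ℕ) : ℚ) + 1) + N * (N + 1) / 2),
      Fin.sum_univ_eq_sum_range
        (fun k => ((k : ℚ) + 1) ^ 2 - (N + 1) * ((k : ℚ) + 1) + N * (N + 1) / 2),
      sumf]
  have hsum2 : (∑ π : Equiv.Perm (Fin (m + 1)),
      (∑ v ∈ Finset.univ.erase h, |((π v : ℕ) : ℚ) - ((π h : ℕ) : ℚ)|) ^ 2)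
      = (Nat.factorial m : ℚ) * (N * ((N + 1) * (N - 1) * (7 * N ^ 2 - 8) / 60)) := by
    rw [Finset.sum_congr rfl fun π _ => by rw [part1 π]]
    rw [permSum h (fun t : Fin (m + 1) => ((((t : ℕ) : ℚ) + 1) ^ 2
        - (N + 1) * (((t : ℕ) : ℚ) + 1) + N * (N + 1) / 2) ^ 2),
      Fin.sum_univ_eq_sum_range
        (fun k => (((k : ℚ) + 1) ^ 2 - (N + 1) * ((k : ℚ) + 1) + N * (N + 1) / 2) ^ 2),
      sumf2]
  rw [hsum, hsum2]
  have hfact : ((m + 1).factorial : ℚ) = ((m + 1 : ℕ) : ℚ) * (m.factorial : ℚ) := by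
    rw [Nat.factorial_succ]; push_cast; ring
  have hfm : (m.factorial : ℚ) ≠ 0 := Nat.cast_ne_zero.mpr (Nat.factorial_ne_zero m)
  have hNm : N = (m : ℚ) + 1 := by rw [hN]; push_cast; ring
  rw [hfact]
  field_simp
  rw [hNm]
  push_cast
  ring
end
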